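/- Let Z be a random vector in ℝ^d defined on a probability space with ∫ ZZᵀ dμ invertible, and let f be C¹. Then the infidelity-minimizing explanation equals γ* = (∫ ZZᵀ dμ)⁻¹ (∫ ZZᵀ · IG(f,x,Z) dμ), where IG(f,x,Z) = ∫₀¹ ∇f(x + (t-1)Z) dt. -/

import Mathlib

open MeasureTheory Matrix

theorem ftc_aux {d : ℕ} (f : (Fin d → ℝ) → ℝ) (hf : ContDiff ℝ 1 f) (x z : Fin d → ℝ) :
    ∑ j, z j * (∫ t in (0:ℝ)..1, fderiv ℝ f (x + (t - 1) • z) (Pi.single j 1))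
      = f x - f (x - z) := by
  have hdiff := hf.differentiable one_ne_zero
  have hφ : ∀ t : ℝ, HasDerivAt (fun t => f (x + (t - 1) • z))
      (fderiv ℝ f (x + (t - 1) • z) z) t := by
    intro t
    have h1 : HasDerivAt (fun t : ℝ => x + (t - 1) • z) z t := by
      have h0 : HasDerivAt (fun t : ℝ => (t - 1)) 1 t := (hasDerivAt_id t).sub_const 1
      simpa using (h0.smul_const z).const_add x
    exact ((hdiff _).hasFDerivAt.comp_hasDerivAt t h1)
  have hcont : ∀ v : Fin d → ℝ, Continuous fun t : ℝ => fderiv ℝ f (x + (t - 1) • z) v := by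
    intro v
    exact (((hf.continuous_fderiv one_ne_zero).comp (by continuity)).clm_apply continuous_const)
  have hint : (∫ t in (0:ℝ)..1, fderiv ℝ f (x + (t - 1) • z) z) = f x - f (x - z) := by
    rw [intervalIntegral.integral_eq_sub_of_hasDerivAt (fun t _ => hφ t)
      ((hcont z).intervalIntegrable 0 1)]
    norm_num
    rw [sub_eq_add_neg, ← neg_one_smul ℝ z]
  calc ∑ j, z j * (∫ t in (0:ℝ)..1, fderiv ℝ f (x + (t - 1) • z) (Pi.single j 1))
      = ∫ t in (0:ℝ)..1, ∑ j, z j * fderiv ℝ f (x + (t - 1) • z) (Pi.single j 1) := by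
        rw [intervalIntegral.integral_finset_sum]
        · simp_rw [intervalIntegral.integral_const_mul]
        · exact fun j _ => (continuous_const.mul (hcont _)).intervalIntegrable 0 1
    _ = ∫ t in (0:ℝ)..1, fderiv ℝ f (x + (t - 1) • z) z := by
        have hz : z = ∑ j, z j • (Pi.single j 1 : Fin d → ℝ) := by
          funext i
          simp [Pi.single_apply, Finset.sum_ite_eq', mul_comm]
        have hL : ∀ L : (Fin d → ℝ) →L[ℝ] ℝ, L z = ∑ j, z j * L (Pi.single j 1) := by
          intro L
          conv_lhs => rw [hz]
          rw [map_sum]; simp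
        congr 1; ext t
        rw [hL]
    _ = f x - f (x - z) := hint

theorem stmt_5 {d : ℕ} {Ω : Type*} [MeasurableSpace Ω] (μ : Measure Ω) [IsProbabilityMeasure μ]
    (Z : Ω → Fin d → ℝ) (hZmeas : Measurable Z)
    (f : (Fin d → ℝ) → ℝ) (hf : ContDiff ℝ 1 f) (x : Fin d → ℝ)
    (M : Matrix (Fin d) (Fin d) ℝ)
    (hM : ∀ i j, M i j = ∫ ω, Z ω i * Z ω j ∂μ) (hMinv : IsUnit M.det)
    (IG : Ω → Fin d → ℝ)
    (hIG : ∀ ω j, IG ω j = ∫ t in (0:ℝ)..1, fderiv ℝ f (x + (t - 1) • Z ω) (Pi.single j 1))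
    (hZZ : ∀ i j, Integrable (fun ω => Z ω i * Z ω j) μ)
    (hZZIG : ∀ i, Integrable (fun ω => ∑ j, Z ω i * Z ω j * IG ω j) μ)
    (hIF : ∀ γ : Fin d → ℝ,
      Integrable (fun ω => (∑ i, Z ω i * γ i - (f x - f (x - Z ω))) ^ 2) μ)
    (γstar : Fin d → ℝ)
    (hγstar : γstar = M⁻¹ *ᵥ fun i => ∫ ω, ∑ j, Z ω i * Z ω j * IG ω j ∂μ) :
    ∀ γ : Fin d → ℝ,
      ∫ ω, (∑ i, Z ω i * γstar i - (f x - f (x - Z ω))) ^ 2 ∂μ ≤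
      ∫ ω, (∑ i, Z ω i * γ i - (f x - f (x - Z ω))) ^ 2 ∂μ := by
  intro γ
  set g : Ω → ℝ := fun ω => f x - f (x - Z ω) with hg
  have key1 : ∀ ω, ∑ j, Z ω j * IG ω j = g ω := by
    intro ω
    simp_rw [hIG]
    exact ftc_aux f hf x (Z ω)
  have key2 : ∀ i ω, (∑ j, Z ω i * Z ω j * IG ω j) = Z ω i * g ω := by
    intro i ω
    rw [← key1 ω, Finset.mul_sum]
    congr 1; ext j; ring
  have hZg : ∀ i, Integrable (fun ω => Z ω i * g ω) μ := by
    intro i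
    have h := hZZIG i
    simpa [funext (key2 i)] using h
  have hZS : ∀ (v : Fin d → ℝ) i, Integrable (fun ω => Z ω i * ∑ j, Z ω j * v j) μ := by
    intro v i
    have h : (fun ω => Z ω i * ∑ j, Z ω j * v j) = fun ω => ∑ j, v j * (Z ω i * Z ω j) := by
      funext ω; rw [Finset.mul_sum]; congr 1; ext j; ring
    rw [h]
    exact integrable_finset_sum _ (fun j _ => (hZZ i j).const_mul (v j))
  set b : Fin d → ℝ := fun i => ∫ ω, ∑ j, Z ω i * Z ω j * IG ω j ∂μ with hb
  have hbi : ∀ i, b i = ∫ ω, Z ω i * g ω ∂μ := by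
    intro i
    rw [hb]
    exact integral_congr_ae (Filter.Eventually.of_forall fun ω => key2 i ω)
  have hMγ : M *ᵥ γstar = b := by
    rw [hγstar, Matrix.mulVec_mulVec, Matrix.mul_nonsing_inv M hMinv, Matrix.one_mulVec]
  have hMγi : ∀ i, (∫ ω, Z ω i * ∑ j, Z ω j * γstar j ∂μ) = b i := by
    intro i
    have h2 : (fun ω => Z ω i * ∑ j, Z ω j * γstar j)
        = fun ω => ∑ j, (Z ω i * Z ω j) * γstar j := by
      funext ω; rw [Finset.mul_sum]; congr 1; ext j; ring
    rw [h2, integral_finset_sum _ (fun j _ => (hZZ i j).mul_const (γstar j))]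
    simp_rw [integral_mul_const]
    rw [← hMγ]
    simp [Matrix.mulVec, dotProduct, hM]
  set δ : Fin d → ℝ := fun i => γ i - γstar i with hδ
  set cross : Ω → ℝ := fun ω =>
    (∑ i, Z ω i * γstar i - g ω) * (∑ i, Z ω i * δ i) with hcr
  have hterm : ∀ i, Integrable
      (fun ω => δ i * (Z ω i * (∑ j, Z ω j * γstar j) - Z ω i * g ω)) μ :=
    fun i => (((hZS γstar i).sub (hZg i)).const_mul (δ i))
  have hcross_eq : ∀ ω, cross ω =
      ∑ i, δ i * (Z ω i * (∑ j, Z ω j * γstar j) - Z ω i * g ω) := by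
    intro ω
    show (∑ i, Z ω i * γstar i - g ω) * (∑ i, Z ω i * δ i) = _
    rw [Finset.mul_sum]
    exact Finset.sum_congr rfl (fun i _ => by ring)
  have hcross_int : Integrable cross μ := by
    apply (integrable_finset_sum Finset.univ (fun i _ => hterm i)).congr
    exact Filter.Eventually.of_forall (fun ω => (hcross_eq ω).symm)
  have hcross_zero : ∫ ω, cross ω ∂μ = 0 := by
    rw [integral_congr_ae (Filter.Eventually.of_forall hcross_eq),
      integral_finset_sum _ (fun i _ => hterm i)]
    apply Finset.sum_eq_zero
    intro i _
    rw [integral_const_mul, integral_sub (hZS γstar i) (hZg i), hMγi i, hbi i]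
    ring
  set q : Ω → ℝ := fun ω => (∑ i, Z ω i * γ i - g ω) ^ 2
      - (∑ i, Z ω i * γstar i - g ω) ^ 2 - 2 * cross ω with hq
  have hq_int : Integrable q μ := ((hIF γ).sub (hIF γstar)).sub (hcross_int.const_mul 2)
  have hq_nonneg : ∀ ω, 0 ≤ q ω := by
    intro ω
    have hsum : ∑ i, Z ω i * γ i = ∑ i, Z ω i * γstar i + ∑ i, Z ω i * δ i := by
      rw [← Finset.sum_add_distrib]
      congr 1; ext i; rw [hδ]; ring
    have e : q ω = (∑ i, Z ω i * δ i) ^ 2 := by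
      show (∑ i, Z ω i * γ i - g ω) ^ 2 - (∑ i, Z ω i * γstar i - g ω) ^ 2
          - 2 * ((∑ i, Z ω i * γstar i - g ω) * ∑ i, Z ω i * δ i) = _
      rw [hsum]; ring
    rw [e]; positivity
  have hsplit : ∫ ω, (∑ i, Z ω i * γ i - g ω) ^ 2 ∂μ
      = ∫ ω, (∑ i, Z ω i * γstar i - g ω) ^ 2 ∂μ + (2 * ∫ ω, cross ω ∂μ + ∫ ω, q ω ∂μ) := by
    rw [← integral_const_mul, ← integral_add (hcross_int.const_mul 2) hq_int,
      ← integral_add (hIF γstar)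
        (show Integrable (fun ω => 2 * cross ω + q ω) μ from (hcross_int.const_mul 2).add hq_int)]
    apply integral_congr_ae
    apply Filter.Eventually.of_forall
    intro ω
    show _ = (∑ i, Z ω i * γstar i - g ω) ^ 2 + (2 * cross ω +
      ((∑ i, Z ω i * γ i - g ω) ^ 2 - (∑ i, Z ω i * γstar i - g ω) ^ 2 - 2 * cross ω))
    ring
  rw [hsplit, hcross_zero]
  have : 0 ≤ ∫ ω, q ω ∂μ := integral_nonneg hq_nonneg
  linarith
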